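/- For any n-dimensional probability vector y and positive integer k, M_k(y) ⊆ T_{k·n^{k-1}}(y). That is, if x^{⊗k} ≺ y^{⊗k}, then there exists a probability vector c of dimension k·n^{k-1} such that x ⊗ c ≺ y ⊗ c. -/

import Mathlib

open Finset

variable {ι κ : Type*}

/-- `eSum x l` is the sum of the `l` largest components of `x`. -/
noncomputable def eSum [Fintype ι] (x : ι → ℝ) (l : ℕ) : ℝ :=
  sSup {r : ℝ | ∃ s : Finset ι, s.card = l ∧ r = ∑ i ∈ s, x i}

/-- Majorization `x ≺ y` for vectors over the same (finite) index type:
`e_l(x) ≤ e_l(y)` for all `1 ≤ l ≤ n - 1`, with equal total sums. -/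
def Maj [Fintype ι] (x y : ι → ℝ) : Prop :=
  (∀ l : ℕ, 1 ≤ l → l < Fintype.card ι → eSum x l ≤ eSum y l) ∧
    ∑ i, x i = ∑ i, y i

/-- A probability vector: nonnegative components summing to 1. -/
def IsProbVec [Fintype ι] (x : ι → ℝ) : Prop :=
  (∀ i, 0 ≤ x i) ∧ ∑ i, x i = 1

/-- Kronecker product of two vectors. -/
def kron (x : ι → ℝ) (c : κ → ℝ) : ι × κ → ℝ := fun p => x p.1 * c p.2

/-- `k`-fold Kronecker power of a vector. -/
def kpow (x : ι → ℝ) (k : ℕ) : (Fin k → ι) → ℝ := fun f => ∏ j, x (f j)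

/-- Direct sum (concatenation) of two vectors. -/
def dsum (x : ι → ℝ) (c : κ → ℝ) : ι ⊕ κ → ℝ := Sum.elim x c

/-- `k`-fold direct sum (concatenation) of `x` with itself. -/
def dpow (x : ι → ℝ) (k : ℕ) : Fin k × ι → ℝ := fun p => x p.2

/-- `x ∈ S°(y)`: all partial-sum inequalities `e_l(x) < e_l(y)` are strict for
`1 ≤ l ≤ n - 1`, and the total sums coincide. -/
def InteriorS [Fintype ι] (x y : ι → ℝ) : Prop :=
  (∀ l : ℕ, 1 ≤ l → l < Fintype.card ι → eSum x l < eSum y l) ∧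
    ∑ i, x i = ∑ i, y i

/-- `d_x`: the number of nonzero components of `x`. -/
noncomputable def dsupp (x : ι → ℝ) : ℕ := Nat.card (Function.support x)

/-- The `α`-Renyi entropy `S^{(α)}(x)`; at `α = 1` it is the Shannon entropy. -/
noncomputable def renyi [Fintype ι] (x : ι → ℝ) (α : ℝ) : ℝ :=
  if α = 1 then -∑ i, x i * Real.logb 2 (x i)
  else (if 0 ≤ α then (1 : ℝ) else -1) / (1 - α) *
    Real.logb 2 (∑ i, if x i = 0 then 0 else x i ^ α)

/-- The Renyi entropy of `x` is not less than that of `y`. -/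
def RenyiGE [Fintype ι] [Fintype κ] (x : ι → ℝ) (y : κ → ℝ) : Prop :=
  (dsupp x > dsupp y ∧ ∀ α : ℝ, 0 ≤ α → renyi y α ≤ renyi x α) ∨
  (dsupp x = dsupp y ∧ ∀ α : ℝ, renyi y α ≤ renyi x α)


section helpers
variable {n m : ℕ}

/-- Non-dependent version of `Fin.insertNth`. -/
def insF (j : Fin (m+1)) (a : Fin n) (f : Fin m → Fin n) : Fin (m+1) → Fin n :=
  Fin.insertNth (α := fun _ => Fin n) j a f

lemma insF_same (j : Fin (m+1)) (a : Fin n) (f : Fin m → Fin n) : insF j a f j = a :=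
  Fin.insertNth_apply_same (α := fun _ => Fin n) j a f

lemma insF_succAbove (j : Fin (m+1)) (a : Fin n) (f : Fin m → Fin n) (i : Fin m) :
    insF j a f (j.succAbove i) = f i :=
  Fin.insertNth_apply_succAbove (α := fun _ => Fin n) j a f i

lemma succAbove_le_iff (j : Fin (m+1)) (i : Fin m) :
    ((j.succAbove i : Fin (m+1)) : ℕ) ≤ (j:ℕ) ↔ (i:ℕ) < (j:ℕ) := by
  rcases Nat.lt_or_ge (i:ℕ) (j:ℕ) with hij | hij
  · rw [Fin.succAbove_of_castSucc_lt _ _ (by rwa [Fin.lt_def, Fin.coe_castSucc])]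
    simp only [Fin.coe_castSucc]; omega
  · rw [Fin.succAbove_of_le_castSucc _ _ (by rwa [Fin.le_def, Fin.coe_castSucc])]
    simp only [Fin.val_succ]; omega

lemma succAbove_lt_iff (j : Fin (m+1)) (i : Fin m) :
    ((j.succAbove i : Fin (m+1)) : ℕ) < (j:ℕ) ↔ (i:ℕ) < (j:ℕ) := by
  rcases Nat.lt_or_ge (i:ℕ) (j:ℕ) with hij | hij
  · rw [Fin.succAbove_of_castSucc_lt _ _ (by rwa [Fin.lt_def, Fin.coe_castSucc])]
    simp only [Fin.coe_castSucc]
  · rw [Fin.succAbove_of_le_castSucc _ _ (by rwa [Fin.le_def, Fin.coe_castSucc])]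
    simp only [Fin.val_succ]; omega

lemma insF_inj {j : Fin (m+1)} {a a' : Fin n} {f f' : Fin m → Fin n}
    (h : insF j a f = insF j a' f') : a = a' ∧ f = f' := by
  constructor
  · have := congrFun h j
    rwa [insF_same, insF_same] at this
  · funext i
    have := congrFun h (j.succAbove i)
    rwa [insF_succAbove, insF_succAbove] at this

lemma prod_ins_le (x y : Fin n → ℝ) (j : Fin (m+1)) (a : Fin n) (f : Fin m → Fin n) :
    ∏ i : Fin (m+1), (if (i:ℕ) ≤ (j:ℕ) then x else y) (insF j a f i)
      = x a * ∏ i : Fin m, (if (i:ℕ) < (j:ℕ) then x else y) (f i) := by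
  rw [Fin.prod_univ_succAbove (fun i => (if (i:ℕ) ≤ (j:ℕ) then x else y) (insF j a f i)) j]
  congr 1
  · rw [insF_same, if_pos le_rfl]
  · refine Finset.prod_congr rfl fun i _ => ?_
    rw [insF_succAbove]
    exact congrFun (if_congr (succAbove_le_iff j i) rfl rfl) (f i)

lemma prod_ins_lt (x y : Fin n → ℝ) (j : Fin (m+1)) (a : Fin n) (f : Fin m → Fin n) :
    ∏ i : Fin (m+1), (if (i:ℕ) < (j:ℕ) then x else y) (insF j a f i)
      = y a * ∏ i : Fin m, (if (i:ℕ) < (j:ℕ) then x else y) (f i) := by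
  rw [Fin.prod_univ_succAbove (fun i => (if (i:ℕ) < (j:ℕ) then x else y) (insF j a f i)) j]
  congr 1
  · rw [insF_same, if_neg (lt_irrefl _)]
  · refine Finset.prod_congr rfl fun i _ => ?_
    rw [insF_succAbove]
    exact congrFun (if_congr (succAbove_lt_iff j i) rfl rfl) (f i)

end helpers

lemma eSum_finite [Fintype ι] (x : ι → ℝ) (l : ℕ) :
    {r : ℝ | ∃ s : Finset ι, s.card = l ∧ r = ∑ i ∈ s, x i}.Finite := by
  have : {r : ℝ | ∃ s : Finset ι, s.card = l ∧ r = ∑ i ∈ s, x i}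
      ⊆ ↑((univ.powersetCard l).image fun s => ∑ i ∈ s, x i) := by
    rintro r ⟨s, hc, rfl⟩
    simp only [coe_image, Set.mem_image, mem_coe, mem_powersetCard]
    exact ⟨s, by simp [hc], rfl⟩
  exact Set.Finite.subset (Finset.finite_toSet _) this

lemma sum_le_eSum [Fintype ι] (x : ι → ℝ) (s : Finset ι) :
    ∑ i ∈ s, x i ≤ eSum x s.card :=
  le_csSup ((eSum_finite x s.card).bddAbove) ⟨s, rfl, rfl⟩

lemma exists_eSum [Fintype ι] (x : ι → ℝ) {l : ℕ} (hl : l ≤ Fintype.card ι) :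
    ∃ s : Finset ι, s.card = l ∧ eSum x l = ∑ i ∈ s, x i := by
  have hne : {r : ℝ | ∃ s : Finset ι, s.card = l ∧ r = ∑ i ∈ s, x i}.Nonempty := by
    obtain ⟨t, -, ht⟩ := Finset.exists_subset_card_eq (s := (univ : Finset ι)) (n := l)
      (by simpa using hl)
    exact ⟨∑ i ∈ t, x i, t, ht, rfl⟩
  have := hne.csSup_mem (eSum_finite x l)
  exact this

lemma eSum_zero [Fintype ι] (x : ι → ℝ) : eSum x 0 = 0 := by
  obtain ⟨s, hc, he⟩ := exists_eSum x (l := 0) (Nat.zero_le _)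
  rw [he, Finset.card_eq_zero.mp hc, Finset.sum_empty]

lemma eSum_card [Fintype ι] (x : ι → ℝ) : eSum x (Fintype.card ι) = ∑ i, x i := by
  refine le_antisymm ?_ ?_
  · obtain ⟨s, hc, he⟩ := exists_eSum x (le_refl (Fintype.card ι))
    have : s = univ := Finset.eq_univ_of_card s (by simpa using hc)
    rw [he, this]
  · simpa using sum_le_eSum x univ

lemma maj_le [Fintype ι] {x y : ι → ℝ} (h : Maj x y) {l : ℕ} (hl : l ≤ Fintype.card ι) :
    eSum x l ≤ eSum y l := by
  rcases Nat.eq_zero_or_pos l with rfl | hl1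
  · simp [eSum_zero]
  rcases eq_or_lt_of_le hl with heq | hlt
  · subst heq; rw [eSum_card, eSum_card, h.2]
  · exact h.1 l hl1 hlt

lemma eSum_comp [Fintype ι] [Fintype κ] (e : κ ≃ ι) (x : ι → ℝ) (l : ℕ) :
    eSum (x ∘ e) l = eSum x l := by
  unfold eSum
  congr 1
  ext r
  constructor
  · rintro ⟨s, hc, rfl⟩
    exact ⟨s.map e.toEmbedding, by simp [hc], by rw [Finset.sum_map]; rfl⟩
  · rintro ⟨s, hc, rfl⟩
    refine ⟨s.map e.symm.toEmbedding, by simp [hc], ?_⟩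
    rw [Finset.sum_map]
    simp

lemma maj_congr [Fintype ι] [Fintype κ] {x y : ι → ℝ} (e e' : κ ≃ ι) (h : Maj x y) :
    Maj (x ∘ e) (y ∘ e') := by
  have hcard : Fintype.card κ = Fintype.card ι := Fintype.card_congr e
  constructor
  · intro l hl1 hl2
    rw [eSum_comp, eSum_comp]
    exact h.1 l hl1 (hcard ▸ hl2)
  · rw [show ∑ i, (x ∘ e) i = ∑ i, x i from Equiv.sum_comp e x,
      show ∑ i, (y ∘ e') i = ∑ i, y i from Equiv.sum_comp e' y]
    exact h.2

lemma maj_dsum [Fintype ι] [Fintype κ] {a b : ι → ℝ} (z : κ → ℝ) (h : Maj a b) :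
    Maj (dsum a z) (dsum b z) := by
  constructor
  · intro l hl1 hl2
    obtain ⟨s, hsc, hse⟩ := exists_eSum (dsum a z) hl2.le
    have hcard : s.toLeft.card + s.toRight.card = l := by
      rw [← hsc]; exact Finset.card_toLeft_add_card_toRight (u := s)
    have hsum : ∑ i ∈ s, dsum a z i = ∑ i ∈ s.toLeft, a i + ∑ j ∈ s.toRight, z j := by
      conv_lhs => rw [← Finset.toLeft_disjSum_toRight (u := s)]
      rw [Finset.sum_disjSum]; rfl
    have h1 : ∑ i ∈ s.toLeft, a i ≤ eSum b s.toLeft.card :=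
      le_trans (sum_le_eSum a s.toLeft)
        (maj_le h (by simpa using Finset.card_le_card s.toLeft.subset_univ))
    obtain ⟨t, htc, hte⟩ := exists_eSum b
      (show s.toLeft.card ≤ Fintype.card ι by simpa using Finset.card_le_card s.toLeft.subset_univ)
    have h2 : eSum (dsum a z) l ≤ ∑ i ∈ t.disjSum s.toRight, dsum b z i := by
      rw [Finset.sum_disjSum]
      rw [hse, hsum]
      have : ∑ i ∈ t, dsum b z (Sum.inl i) = ∑ i ∈ t, b i := rfl
      rw [this]
      have : ∑ j ∈ s.toRight, dsum b z (Sum.inr j) = ∑ j ∈ s.toRight, z j := rfl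
      rw [this, ← hte]
      exact add_le_add_left h1 _
    refine h2.trans ?_
    have : (t.disjSum s.toRight).card = l := by rw [Finset.card_disjSum, htc, hcard]
    calc ∑ i ∈ t.disjSum s.toRight, dsum b z i ≤ eSum (dsum b z) (t.disjSum s.toRight).card :=
          sum_le_eSum _ _
      _ = eSum (dsum b z) l := by rw [this]
  · rw [show ∑ i, dsum a z i = ∑ i, a i + ∑ j, z j from Fintype.sum_sum_type _,
      show ∑ i, dsum b z i = ∑ i, b i + ∑ j, z j from Fintype.sum_sum_type _, h.2]

lemma eSum_smul [Fintype ι] {t : ℝ} (ht : 0 ≤ t) (x : ι → ℝ) {l : ℕ}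
    (hl : l ≤ Fintype.card ι) : eSum (fun i => t * x i) l = t * eSum x l := by
  refine le_antisymm ?_ ?_
  · obtain ⟨s, hc, he⟩ := exists_eSum (fun i => t * x i) hl
    rw [he, ← Finset.mul_sum]
    exact mul_le_mul_of_nonneg_left (by rw [← hc]; exact sum_le_eSum x s) ht
  · obtain ⟨s, hc, he⟩ := exists_eSum x hl
    rw [he, Finset.mul_sum]
    calc ∑ i ∈ s, t * x i ≤ eSum (fun i => t * x i) s.card := sum_le_eSum _ _
      _ = eSum (fun i => t * x i) l := by rw [hc]

lemma maj_smul [Fintype ι] {t : ℝ} (ht : 0 ≤ t) {a b : ι → ℝ} (h : Maj a b) :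
    Maj (fun i => t * a i) (fun i => t * b i) := by
  constructor
  · intro l hl1 hl2
    rw [eSum_smul ht a hl2.le, eSum_smul ht b hl2.le]
    exact mul_le_mul_of_nonneg_left (h.1 l hl1 hl2) ht
  · rw [← Finset.mul_sum, ← Finset.mul_sum, h.2]

/-- `M_k(y) ⊆ T_{k·n^{k-1}}(y)`: if `x^{⊗k} ≺ y^{⊗k}` then there is a probability
vector `c` of dimension `k·n^{k-1}` with `x ⊗ c ≺ y ⊗ c`. -/
theorem stmt2 {n : ℕ} (k : ℕ) (hk : 1 ≤ k) (x y : Fin n → ℝ)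
    (hx : IsProbVec x) (hy : IsProbVec y)
    (h : Maj (kpow x k) (kpow y k)) :
    ∃ c : Fin (k * n ^ (k - 1)) → ℝ, IsProbVec c ∧ Maj (kron x c) (kron y c) := by
  classical
  obtain ⟨m, rfl⟩ : ∃ m, k = m + 1 := ⟨k - 1, (Nat.succ_pred_eq_of_pos hk).symm⟩
  set kr : ℝ := ((m : ℝ) + 1)⁻¹ with hkrdef
  have hkr0 : 0 ≤ kr := by positivity
  set c₀ : Fin (m+1) × (Fin m → Fin n) → ℝ :=
    fun p => kr * ∏ i : Fin m, (if (i:ℕ) < (p.1:ℕ) then x else y) (p.2 i) with hc₀def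
  set Z : Fin m × (Fin (m+1) → Fin n) → ℝ :=
    fun p => ∏ i : Fin (m+1), (if (i:ℕ) ≤ (p.1:ℕ) then x else y) (p.2 i) with hZdef
  set gx : Fin n × (Fin (m+1) × (Fin m → Fin n)) →
      (Fin (m+1) → Fin n) ⊕ (Fin m × (Fin (m+1) → Fin n)) :=
    fun p => if h : (p.2.1 : ℕ) < m then Sum.inr (⟨p.2.1, h⟩, insF p.2.1 p.1 p.2.2)
      else Sum.inl (insF p.2.1 p.1 p.2.2) with hgxdef
  set gy : Fin n × (Fin (m+1) × (Fin m → Fin n)) →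
      (Fin (m+1) → Fin n) ⊕ (Fin m × (Fin (m+1) → Fin n)) :=
    fun p => if _ : 0 < (p.2.1 : ℕ) then
        Sum.inr (⟨(p.2.1:ℕ) - 1, by have := p.2.1.isLt; omega⟩, insF p.2.1 p.1 p.2.2)
      else Sum.inl (insF p.2.1 p.1 p.2.2) with hgydef
  have hcards : Fintype.card (Fin n × (Fin (m+1) × (Fin m → Fin n)))
      = Fintype.card ((Fin (m+1) → Fin n) ⊕ (Fin m × (Fin (m+1) → Fin n))) := by
    simp only [Fintype.card_prod, Fintype.card_sum, Fintype.card_fun, Fintype.card_fin]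
    rw [pow_succ]; ring
  have hgx : Function.Bijective gx := by
    rw [Fintype.bijective_iff_injective_and_card]
    refine ⟨?_, hcards⟩
    rintro ⟨a, j, f⟩ ⟨a', j', f'⟩ hEq
    simp only [hgxdef] at hEq
    split_ifs at hEq with h1 h2 h2
    all_goals first
      | (rw [Sum.inr.injEq, Prod.mk.injEq] at hEq
         have hv := hEq.1
         rw [Fin.mk.injEq] at hv
         have hjj : j = j' := by apply Fin.ext; omega
         subst hjj
         obtain ⟨rfl, rfl⟩ := insF_inj hEq.2
         rfl)
      | (rw [Sum.inl.injEq] at hEq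
         have hjj : j = j' := by
           apply Fin.ext
           have hja := j.isLt; have hjb := j'.isLt
           omega
         subst hjj
         obtain ⟨rfl, rfl⟩ := insF_inj hEq
         rfl)
      | exact Sum.noConfusion hEq
  have hgy : Function.Bijective gy := by
    rw [Fintype.bijective_iff_injective_and_card]
    refine ⟨?_, hcards⟩
    rintro ⟨a, j, f⟩ ⟨a', j', f'⟩ hEq
    simp only [hgydef] at hEq
    split_ifs at hEq with h1 h2 h2
    all_goals first
      | (rw [Sum.inr.injEq, Prod.mk.injEq] at hEq
         have hv := hEq.1
         rw [Fin.mk.injEq] at hv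
         have hjj : j = j' := by apply Fin.ext; omega
         subst hjj
         obtain ⟨rfl, rfl⟩ := insF_inj hEq.2
         rfl)
      | (rw [Sum.inl.injEq] at hEq
         have hjj : j = j' := by apply Fin.ext; omega
         subst hjj
         obtain ⟨rfl, rfl⟩ := insF_inj hEq
         rfl)
      | exact Sum.noConfusion hEq
  set σx := Equiv.ofBijective gx hgx with hσx
  set σy := Equiv.ofBijective gy hgy with hσy
  have h3 := maj_congr σx σy (maj_smul hkr0 (maj_dsum Z h))
  have hxeq : kron x c₀ = (fun q => kr * dsum (kpow x (m+1)) Z q) ∘ σx := by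
    funext p
    obtain ⟨a, j, f⟩ := p
    show x a * c₀ (j, f) = kr * dsum (kpow x (m+1)) Z (gx (a, j, f))
    simp only [hgxdef, hc₀def]
    split_ifs with h1
    · show x a * (kr * _) = kr * Z (⟨(j:ℕ), h1⟩, insF j a f)
      simp only [hZdef]
      rw [show ∏ i : Fin (m+1),
          (if (i:ℕ) ≤ ((⟨(j:ℕ), h1⟩ : Fin m) : ℕ) then x else y) (insF j a f i)
          = ∏ i : Fin (m+1), (if (i:ℕ) ≤ (j:ℕ) then x else y) (insF j a f i) from rfl,
        prod_ins_le x y j a f]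
      ring
    · show x a * (kr * _) = kr * kpow x (m+1) (insF j a f)
      have hkp : kpow x (m+1) (insF j a f)
          = ∏ i : Fin (m+1), (if (i:ℕ) ≤ (j:ℕ) then x else y) (insF j a f i) := by
        refine Finset.prod_congr rfl fun i _ => ?_
        rw [if_pos (show (i:ℕ) ≤ (j:ℕ) by have hja := j.isLt; have := i.isLt; omega)]
      rw [hkp, prod_ins_le x y j a f]
      ring
  have hyeq : kron y c₀ = (fun q => kr * dsum (kpow y (m+1)) Z q) ∘ σy := by
    funext p
    obtain ⟨a, j, f⟩ := p
    show y a * c₀ (j, f) = kr * dsum (kpow y (m+1)) Z (gy (a, j, f))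
    simp only [hgydef, hc₀def]
    split_ifs with h1
    · have hZval : ∀ jm : Fin m, (jm : ℕ) = (j:ℕ) - 1 → Z (jm, insF j a f)
          = ∏ i : Fin (m+1), (if (i:ℕ) < (j:ℕ) then x else y) (insF j a f i) := by
        intro jm hjm
        simp only [hZdef]
        exact Finset.prod_congr rfl fun i _ =>
          congrFun (if_congr (by rw [hjm]; omega) rfl rfl) _
      show y a * (kr * ∏ i : Fin m, (if (i:ℕ) < (j:ℕ) then x else y) (f i))
          = kr * Z (⟨(j:ℕ) - 1, by have := j.isLt; omega⟩, insF j a f)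
      rw [hZval ⟨(j:ℕ) - 1, by have := j.isLt; omega⟩ rfl, prod_ins_lt x y j a f]
      ring
    · show y a * (kr * _) = kr * kpow y (m+1) (insF j a f)
      have hkp : kpow y (m+1) (insF j a f)
          = ∏ i : Fin (m+1), (if (i:ℕ) < (j:ℕ) then x else y) (insF j a f i) := by
        refine Finset.prod_congr rfl fun i _ => ?_
        rw [if_neg (show ¬ (i:ℕ) < (j:ℕ) by omega)]
      rw [hkp, prod_ins_lt x y j a f]
      ring
  rw [← hxeq, ← hyeq] at h3
  have hcard2 : Fintype.card (Fin ((m+1) * n ^ (m + 1 - 1)))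
      = Fintype.card (Fin (m+1) × (Fin m → Fin n)) := by
    simp [Fintype.card_fun]
  set eqc : Fin ((m+1) * n ^ (m + 1 - 1)) ≃ Fin (m+1) × (Fin m → Fin n) :=
    Fintype.equivOfCardEq hcard2 with heqc
  refine ⟨c₀ ∘ eqc, ⟨?_, ?_⟩, ?_⟩
  · intro i
    simp only [Function.comp, hc₀def]
    refine mul_nonneg hkr0 (Finset.prod_nonneg fun i _ => ?_)
    split_ifs
    · exact hx.1 _
    · exact hy.1 _
  · rw [show ∑ i, (c₀ ∘ eqc) i = ∑ p, c₀ p from Equiv.sum_comp eqc c₀]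
    simp only [hc₀def]
    rw [Fintype.sum_prod_type]
    have inner : ∀ j : Fin (m+1),
        ∑ f : Fin m → Fin n, ∏ i : Fin m, (if (i:ℕ) < (j:ℕ) then x else y) (f i) = 1 := by
      intro j
      have hps := Finset.prod_univ_sum (fun _ : Fin m => (univ : Finset (Fin n)))
        (fun i a => (if (i:ℕ) < (j:ℕ) then x else y) a)
      rw [Fintype.piFinset_univ] at hps
      rw [← hps]
      have hone : ∀ i : Fin m, ∑ a, (if (i:ℕ) < (j:ℕ) then x else y) a = 1 := by
        intro i
        split_ifs
        · exact hx.2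
        · exact hy.2
      rw [Finset.prod_congr rfl fun i _ => hone i, Finset.prod_const_one]
    have hrow : ∀ j : Fin (m+1), (∑ f : Fin m → Fin n,
        kr * ∏ i : Fin m, (if (i:ℕ) < (j:ℕ) then x else y) (f i)) = kr := by
      intro j
      rw [← Finset.mul_sum, inner j, mul_one]
    rw [Finset.sum_congr rfl fun j _ => hrow j, Finset.sum_const, Finset.card_univ,
      Fintype.card_fin, nsmul_eq_mul, hkrdef]
    push_cast
    rw [mul_inv_cancel₀ (by positivity : ((m : ℝ) + 1) ≠ 0)]
  · set e2 : (Fin n × Fin ((m+1) * n ^ (m + 1 - 1)))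
        ≃ (Fin n × (Fin (m+1) × (Fin m → Fin n))) := (Equiv.refl (Fin n)).prodCongr eqc
      with he2
    have hx2 : kron x (c₀ ∘ eqc) = (kron x c₀) ∘ e2 := by
      funext p
      obtain ⟨a, b⟩ := p
      simp [he2, kron, Equiv.prodCongr_apply, Prod.map]
    have hy2 : kron y (c₀ ∘ eqc) = (kron y c₀) ∘ e2 := by
      funext p
      obtain ⟨a, b⟩ := p
      simp [he2, kron, Equiv.prodCongr_apply, Prod.map]
    rw [hx2, hy2]
    exact maj_congr e2 e2 h3
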